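/- For d, r ≥ 1 and 1 ≤ i ≤ d, the sum over j from 1 to d of C(r-1, d+1, ir-j)·A(d,j) equals r^d·A(d,i), where A(d,j) is the Eulerian number counting permutations of {1,...,d} with j-1 descents and C(r-1, d+1, ir-j) is the number of weak compositions of ir-j into d+1 parts each at most r-1. -/

import Mathlib

open scoped Classical BigOperators

noncomputable section

/-- Descent set of a permutation of `Fin d`. -/
def descents (d : ℕ) (π : Equiv.Perm (Fin d)) : Finset (Fin d) :=
  Finset.univ.filter (fun t => ∃ h : (t : ℕ) + 1 < d, π ⟨(t : ℕ) + 1, h⟩ < π t)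

/-- Eulerian number `A(d,j)`: permutations of `{1,…,d}` with `j-1` descents. -/
def A (d j : ℕ) : ℕ :=
  (Finset.univ.filter (fun π : Equiv.Perm (Fin d) => (descents d π).card = j - 1)).card

/-- `C s n m`: number of weak compositions of `m` into `n` parts, each part at most `s`. -/
def C (s n : ℕ) (m : ℤ) : ℕ :=
  Fintype.card {v : Fin n → Fin (s + 1) // ∑ t, ((v t : ℕ) : ℤ) = m}

/-- The hypersimplex `Δ_{d,j} ⊆ ℝ^{d+1}`. -/
def Δ (d j : ℕ) : Set (Fin (d + 1) → ℝ) :=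
  {x | ∑ t, x t = j ∧ ∀ t, 0 ≤ x t ∧ x t ≤ 1}

/-- The lattice translate `v + Δ_{d,j}`. -/
def latTranslate (d : ℕ) (v : Fin (d + 1) → ℤ) (j : ℕ) : Set (Fin (d + 1) → ℝ) :=
  {x | (fun t => x t - (v t : ℝ)) ∈ Δ d j}

/-- The 0/1 indicator vector of a subset `T ⊆ [d+1]`. -/
def ind (d : ℕ) (T : Finset (Fin (d + 1))) : Fin (d + 1) → ℝ :=
  fun t => if t ∈ T then 1 else 0

/-- `F` is a face of `P`: empty, or the set of maximizers of a linear functional over `P`. -/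
def IsFace {n : ℕ} (P F : Set (Fin n → ℝ)) : Prop :=
  F = ∅ ∨ ∃ f : (Fin n → ℝ) →ₗ[ℝ] ℝ, F = {x | x ∈ P ∧ ∀ y ∈ P, f y ≤ f x}

/-- The `r`-dilate `rΔ_{d,i}`. -/
def rdil (d r i : ℕ) : Set (Fin (d + 1) → ℝ) :=
  {x | ∑ t, x t = (i : ℝ) * r ∧ ∀ t, 0 ≤ x t ∧ x t ≤ r}

/-- The set `𝒞(s, n, m)` of lattice weak compositions of `m` into `n` parts each `≤ s`. -/
def Comp (s n : ℕ) (m : ℤ) : Set (Fin n → ℤ) :=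
  {v | (∀ t, 0 ≤ v t ∧ v t ≤ s) ∧ ∑ t, v t = m}
open Finset

/-- Number of weak compositions of `M` into `n` unbounded nonnegative parts. -/
def hh (n : ℕ) (M : ℤ) : ℤ :=
  if 0 ≤ M then ((M.toNat + n - 1).choose M.toNat : ℤ) else 0

lemma hh_neg {n : ℕ} {M : ℤ} (h : M < 0) : hh n M = 0 := by
  simp [hh, not_le.mpr h]

lemma hh_zero_left (M : ℤ) : hh 0 M = if M = 0 then 1 else 0 := by
  rcases lt_trichotomy M 0 with h | h | h
  · rw [hh_neg h, if_neg h.ne]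
  · subst h; simp [hh]
  · rw [hh, if_pos h.le, if_neg h.ne']
    have h1 : 1 ≤ M.toNat := by omega
    have : M.toNat + 0 - 1 < M.toNat := by omega
    rw [Nat.choose_eq_zero_of_lt this, Nat.cast_zero]

lemma hh_succ (n : ℕ) (M : ℤ) : hh (n + 1) M = hh n M + hh (n + 1) (M - 1) := by
  rcases lt_trichotomy M 0 with h | h | h
  · rw [hh_neg h, hh_neg h, hh_neg (by omega)]; ring
  · subst h
    rw [hh_neg (by norm_num : (0:ℤ) - 1 < 0)]
    simp [hh]
  · have h0 : 0 ≤ M := h.le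
    have h1 : 0 ≤ M - 1 := by omega
    rw [hh, hh, hh, if_pos h0, if_pos h0, if_pos h1]
    obtain ⟨k, hk⟩ : ∃ k, M.toNat = k + 1 := ⟨M.toNat - 1, by omega⟩
    have hk' : (M - 1).toNat = k := by omega
    rw [hk, hk']
    have e1 : k + 1 + (n + 1) - 1 = (k + n) + 1 := by omega
    have e2 : k + 1 + n - 1 = k + n := by omega
    have e3 : k + (n + 1) - 1 = k + n := by omega
    rw [e1, e2, e3]
    rw [Nat.choose_succ_succ (k + n) k]
    push_cast
    ring

lemma hh_block (n s : ℕ) (X : ℤ) :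
    hh (n + 1) X - hh (n + 1) (X - (s + 1)) = ∑ a ∈ range (s + 1), hh n (X - a) := by
  induction s with
  | zero =>
      have := hh_succ n X
      rw [Finset.sum_range_one, Nat.cast_zero, sub_zero]
      push_cast
      linarith
  | succ s ih =>
      rw [Finset.sum_range_succ, ← ih]
      have h2 : hh (n + 1) (X - (s + 1)) - hh (n + 1) (X - (s + 1 + 1)) = hh n (X - (s + 1)) := by
        have := hh_succ n (X - (s + 1))
        have e : X - (s + 1) - 1 = X - (s + 1 + 1) := by ring
        rw [e] at this
        linarith
      push_cast
      push_cast at h2 ⊢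
      linarith

/-- Alternating Pascal transformation. -/
lemma alt_pascal (n : ℕ) (F : ℕ → ℤ) :
    ∑ k ∈ range (n + 2), (-1 : ℤ) ^ k * ((n + 1).choose k) * F k
      = ∑ k ∈ range (n + 1), (-1 : ℤ) ^ k * (n.choose k) * (F k - F (k + 1)) := by
  have expand : ∑ k ∈ range (n + 1), (-1 : ℤ) ^ k * (n.choose k) * (F k - F (k + 1))
      = ∑ k ∈ range (n + 1), (-1 : ℤ) ^ k * (n.choose k) * F k
        - ∑ k ∈ range (n + 1), (-1 : ℤ) ^ k * (n.choose k) * F (k + 1) := by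
    rw [← Finset.sum_sub_distrib]; apply Finset.sum_congr rfl; intro k _; ring
  rw [expand]
  -- LHS : peel off k = 0 via sum_range_succ'
  rw [Finset.sum_range_succ' (fun k => (-1 : ℤ) ^ k * ((n + 1).choose k) * F k) (n + 1)]
  have pascal : ∀ k : ℕ, (((n + 1).choose (k + 1) : ℤ)) = (n.choose k : ℤ) + (n.choose (k + 1) : ℤ) := by
    intro k; exact_mod_cast Nat.choose_succ_succ n k
  have step : ∑ k ∈ range (n + 1), (-1 : ℤ) ^ (k + 1) * ((n + 1).choose (k + 1)) * F (k + 1)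
      = -∑ k ∈ range (n + 1), (-1 : ℤ) ^ k * (n.choose k) * F (k + 1)
        - ∑ k ∈ range (n + 1), (-1 : ℤ) ^ k * (n.choose (k + 1)) * F (k + 1) := by
    rw [← Finset.sum_neg_distrib, ← Finset.sum_sub_distrib]
    apply Finset.sum_congr rfl; intro k _
    rw [pascal k]; ring
  rw [step]
  have split2 : ∑ k ∈ range (n + 1), (-1 : ℤ) ^ k * (n.choose k) * F k
      = ∑ k ∈ range n, (-1 : ℤ) ^ (k + 1) * (n.choose (k + 1)) * F (k + 1) + F 0 := by
    rw [Finset.sum_range_succ' (fun k => (-1 : ℤ) ^ k * (n.choose k) * F k) n]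
    simp
  have top0 : ((-1 : ℤ) ^ (n + 1)) * (n.choose (n + 1)) * F (n + 1) = 0 := by
    rw [Nat.choose_eq_zero_of_lt (by omega)]; push_cast; ring
  have ext2 : ∑ k ∈ range (n + 1), (-1 : ℤ) ^ k * (n.choose (k + 1)) * F (k + 1)
      = -∑ k ∈ range n, (-1 : ℤ) ^ (k+1) * (n.choose (k + 1)) * F (k + 1) := by
    rw [Finset.sum_range_succ]
    rw [Nat.choose_eq_zero_of_lt (by omega : n < n + 1)]
    push_cast
    rw [← Finset.sum_neg_distrib]
    simp only [mul_zero, zero_mul, add_zero]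
    apply Finset.sum_congr rfl; intro k _; ring
  rw [split2, ext2, Nat.choose_zero_right]
  push_cast
  ring

/-- The alternating binomial sum against `hh` is a delta function. -/
lemma alt_sum_hh (n : ℕ) (M : ℤ) :
    ∑ k ∈ range (n + 1), (-1 : ℤ) ^ k * (n.choose k) * hh n (M - k) = if M = 0 then 1 else 0 := by
  induction n generalizing M with
  | zero => simpa using hh_zero_left M
  | succ n ih =>
      rw [alt_pascal n (fun k => hh (n + 1) (M - k))]
      have : ∀ k : ℕ, hh (n + 1) (M - k) - hh (n + 1) (M - (k + 1))
          = hh n (M - k) := by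
        intro k
        have := hh_succ n (M - k)
        have e : M - k - 1 = M - (k + 1) := by push_cast; ring
        rw [e] at this
        linarith
      calc ∑ k ∈ range (n + 1), (-1 : ℤ) ^ k * (n.choose k) *
              (hh (n + 1) (M - k) - hh (n + 1) (M - (k + 1)))
          = ∑ k ∈ range (n + 1), (-1 : ℤ) ^ k * (n.choose k) * hh n (M - k) := by
            apply Finset.sum_congr rfl; intro k _; rw [this k]
        _ = if M = 0 then 1 else 0 := ih M

lemma C_zero (s : ℕ) (M : ℤ) : (C s 0 M : ℤ) = if M = 0 then 1 else 0 := by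
  rcases eq_or_ne M 0 with rfl | h
  · rw [if_pos rfl]
    have : C s 0 0 = 1 := by
      apply Fintype.card_eq_one_iff.mpr
      refine ⟨⟨Fin.elim0, by simp⟩, ?_⟩
      rintro ⟨w, hw⟩
      apply Subtype.ext
      funext t
      exact t.elim0
    rw [this]; norm_num
  · rw [if_neg h]
    have : C s 0 M = 0 := by
      apply Fintype.card_eq_zero_iff.mpr
      constructor
      rintro ⟨w, hw⟩
      apply h
      rw [← hw]
      simp
    rw [this]; norm_num

lemma C_succ (s n : ℕ) (M : ℤ) :
    (C s (n + 1) M : ℤ) = ∑ a ∈ range (s + 1), (C s n (M - a) : ℤ) := by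
  have eqv : {v : Fin (n+1) → Fin (s+1) // ∑ t, ((v t : ℕ) : ℤ) = M}
      ≃ Σ a : Fin (s+1), {v : Fin n → Fin (s+1) // ∑ t, ((v t : ℕ) : ℤ) = M - ((a : ℕ) : ℤ)} := by
    refine ⟨fun p => ⟨p.1 0, ⟨fun t => p.1 t.succ, ?_⟩⟩,
            fun q => ⟨Fin.cons q.1 q.2.1, ?_⟩, ?_, ?_⟩
    · have hv := p.2
      rw [Fin.sum_univ_succ] at hv
      linarith
    · rw [Fin.sum_univ_succ]
      have hw := q.2.2
      simp only [Fin.cons_zero, Fin.cons_succ]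
      linarith
    · rintro ⟨v, hv⟩
      apply Subtype.ext
      exact Fin.cons_self_tail v
    · rintro ⟨a, ⟨w, hw⟩⟩
      refine Sigma.ext rfl (heq_of_eq (Subtype.ext ?_))
      funext t
      simp
  have hcard : C s (n + 1) M = ∑ a : Fin (s + 1), C s n (M - ((a : ℕ) : ℤ)) := by
    rw [C, Fintype.card_congr eqv, Fintype.card_sigma]
    rfl
  rw [hcard]
  push_cast
  rw [Fin.sum_univ_eq_sum_range (fun a => (C s n (M - (a : ℕ)) : ℤ)) (s + 1)]

/-- Inclusion–exclusion for bounded compositions. -/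
lemma C_eq (s n : ℕ) (M : ℤ) :
    (C s n M : ℤ) = ∑ k ∈ range (n + 1), (-1 : ℤ) ^ k * (n.choose k) * hh n (M - k * (s + 1)) := by
  induction n generalizing M with
  | zero =>
      rw [C_zero]
      rw [show (0:ℕ)+1 = 1 from rfl, Finset.sum_range_one, hh_zero_left]
      simp
  | succ n ih =>
      rw [alt_pascal n (fun k => hh (n + 1) (M - k * (s + 1)))]
      have key : ∀ k : ℕ, hh (n + 1) (M - k * (s + 1)) - hh (n + 1) (M - ((k + 1 : ℕ) : ℤ) * (s + 1))
          = ∑ a ∈ range (s + 1), hh n (M - a - k * (s + 1)) := by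
        intro k
        have h0 := hh_block n s (M - k * (s + 1))
        have e : M - k * (s+1) - ((s:ℤ) + 1) = M - ((k + 1 : ℕ) : ℤ) * (s + 1) := by
          push_cast; ring
        rw [e] at h0
        rw [h0]
        apply Finset.sum_congr rfl; intro a _
        congr 1
        ring
      have main : ∑ k ∈ range (n + 1), (-1:ℤ) ^ k * (n.choose k) *
              (hh (n+1) (M - k * (s+1)) - hh (n+1) (M - ((k+1 : ℕ) : ℤ) * (s+1)))
          = (C s (n + 1) M : ℤ) := by
        calc ∑ k ∈ range (n + 1), (-1:ℤ) ^ k * (n.choose k) *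
                (hh (n+1) (M - k * (s+1)) - hh (n+1) (M - ((k+1 : ℕ) : ℤ) * (s+1)))
            = ∑ k ∈ range (n + 1), ∑ a ∈ range (s + 1),
                (-1:ℤ) ^ k * (n.choose k) * hh n (M - a - k * (s+1)) := by
              apply Finset.sum_congr rfl; intro k _
              rw [key k, Finset.mul_sum]
          _ = ∑ a ∈ range (s + 1), ∑ k ∈ range (n + 1),
                (-1:ℤ) ^ k * (n.choose k) * hh n (M - a - k * (s+1)) := Finset.sum_comm
          _ = ∑ a ∈ range (s + 1), (C s n (M - a) : ℤ) := by
              apply Finset.sum_congr rfl; intro a _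
              rw [ih (M - a)]
          _ = (C s (n + 1) M : ℤ) := (C_succ s n M).symm
      exact main.symm

section core

variable {e : ℕ}

/-- Indicator of a non-descent ("ascent") at position `u`. -/
def Et (σ : Equiv.Perm (Fin (e + 1))) (u : ℕ) : ℕ :=
  if h : u + 1 < e + 1 then
    (if σ ⟨u + 1, h⟩ < σ ⟨u, Nat.lt_of_succ_lt h⟩ then 0 else 1) else 0

lemma Et_le_one (σ : Equiv.Perm (Fin (e + 1))) (u : ℕ) : Et σ u ≤ 1 := by
  rw [Et]; split_ifs <;> omega

/-- Number of ascents below `t`. -/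
def ccount (σ : Equiv.Perm (Fin (e + 1))) (t : ℕ) : ℕ := ∑ u ∈ range t, Et σ u

lemma ccount_le (σ : Equiv.Perm (Fin (e + 1))) (t : ℕ) : ccount σ t ≤ t := by
  calc ccount σ t ≤ ∑ u ∈ range t, 1 := Finset.sum_le_sum (fun u _ => Et_le_one σ u)
    _ = t := by simp

lemma ccount_succ (σ : Equiv.Perm (Fin (e + 1))) (t : ℕ) :
    ccount σ (t + 1) = ccount σ t + Et σ t := Finset.sum_range_succ _ t

lemma descents_card_eq (σ : Equiv.Perm (Fin (e + 1))) :
    (descents (e + 1) σ).card = ∑ u ∈ range e, (1 - Et σ u) := by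
  classical
  rw [descents, Finset.card_filter]
  have key : ∀ t : Fin (e + 1),
      (if (∃ h : (t : ℕ) + 1 < e + 1, σ ⟨(t : ℕ) + 1, h⟩ < σ t) then 1 else 0)
        = (fun u : ℕ => if h : u + 1 < e + 1 then
            (if σ ⟨u + 1, h⟩ < σ ⟨u % (e+1), Nat.mod_lt u (Nat.succ_pos e)⟩ then 1 else 0)
            else 0) (t : ℕ) := by
    intro t
    by_cases h : (t : ℕ) + 1 < e + 1
    · simp only [dif_pos h]
      have ht : (⟨(t : ℕ) % (e+1), Nat.mod_lt _ (Nat.succ_pos e)⟩ : Fin (e+1)) = t := by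
        apply Fin.ext; simp [Nat.mod_eq_of_lt t.isLt]
      rw [ht]
      by_cases h2 : σ ⟨(t : ℕ) + 1, h⟩ < σ t
      · rw [if_pos h2, if_pos ⟨h, h2⟩]
      · rw [if_neg h2, if_neg]
        rintro ⟨h', h2'⟩
        exact h2 h2'
    · simp only [dif_neg h]
      rw [if_neg]
      rintro ⟨h', _⟩
      exact h h'
  have h1 := Fin.sum_univ_eq_sum_range (fun u : ℕ => if h : u + 1 < e + 1 then
      (if σ ⟨u + 1, h⟩ < σ ⟨u % (e+1), Nat.mod_lt _ (Nat.succ_pos e)⟩ then 1 else 0) else 0) (e+1)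
  rw [Finset.sum_congr rfl (fun t _ => key t), h1]
  rw [Finset.sum_range_succ]
  have hlast : (if h : e + 1 < e + 1 then
      (if σ ⟨e + 1, h⟩ < σ ⟨e % (e+1), Nat.mod_lt _ (Nat.succ_pos e)⟩ then 1 else 0) else 0) = 0 := by
    rw [dif_neg (lt_irrefl _)]
  rw [hlast, add_zero]
  apply Finset.sum_congr rfl
  intro u hu
  have hu' : u < e := Finset.mem_range.mp hu
  have h : u + 1 < e + 1 := by omega
  rw [dif_pos h, Et, dif_pos h]
  have hmod : (⟨u % (e+1), Nat.mod_lt _ (Nat.succ_pos e)⟩ : Fin (e+1))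
      = ⟨u, Nat.lt_of_succ_lt h⟩ := by
    apply Fin.ext; simp [Nat.mod_eq_of_lt (show u < e + 1 by omega)]
  rw [hmod]
  split_ifs <;> rfl

lemma descents_card_add (σ : Equiv.Perm (Fin (e + 1))) :
    (descents (e + 1) σ).card + ∑ u ∈ range e, Et σ u = e := by
  rw [descents_card_eq, ← Finset.sum_add_distrib]
  calc ∑ u ∈ range e, (1 - Et σ u + Et σ u) = ∑ u ∈ range e, 1 := by
        apply Finset.sum_congr rfl
        intro u _
        have := Et_le_one σ u
        omega
    _ = e := by simp

lemma des_le (σ : Equiv.Perm (Fin (e + 1))) : (descents (e + 1) σ).card ≤ e := by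
  have := descents_card_add σ
  omega

lemma ccount_le' (σ : Equiv.Perm (Fin (e + 1))) {t : ℕ} (ht : t ≤ e) :
    ccount σ t ≤ e - (descents (e + 1) σ).card := by
  have h1 : ccount σ t ≤ ∑ u ∈ range e, Et σ u := by
    apply Finset.sum_le_sum_of_subset (Finset.range_subset_range.mpr ht)
  have := descents_card_add σ
  omega

lemma le_ccount_add (σ : Equiv.Perm (Fin (e + 1))) {t : ℕ} (ht : t ≤ e) :
    t ≤ ccount σ t + (descents (e + 1) σ).card := by
  have h1 : ∑ u ∈ range t, (1 - Et σ u) ≤ ∑ u ∈ range e, (1 - Et σ u) :=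
    Finset.sum_le_sum_of_subset (Finset.range_subset_range.mpr ht)
  have h2 : ∑ u ∈ range t, (1 - Et σ u) + ccount σ t = t := by
    rw [ccount, ← Finset.sum_add_distrib]
    calc ∑ u ∈ range t, (1 - Et σ u + Et σ u) = ∑ u ∈ range t, 1 := by
          apply Finset.sum_congr rfl
          intro u _
          have := Et_le_one σ u
          omega
      _ = t := by simp
  have h3 := descents_card_eq σ
  omega

lemma strictMono_gap {m : ℕ} {g : Fin (e + 1) → Fin m} (hg : StrictMono g)
    {t t' : Fin (e + 1)} (h : (t : ℕ) ≤ (t' : ℕ)) :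
    (g t : ℕ) + ((t' : ℕ) - (t : ℕ)) ≤ (g t' : ℕ) := by
  obtain ⟨k, hk⟩ : ∃ k, (t' : ℕ) = (t : ℕ) + k := ⟨(t' : ℕ) - t, by omega⟩
  clear h
  induction k generalizing t' with
  | zero =>
      have : t' = t := Fin.ext (by omega)
      subst this
      omega
  | succ p ih =>
      have hb : (t : ℕ) + p < e + 1 := by have := t'.isLt; omega
      have h1 := ih (t' := ⟨(t : ℕ) + p, hb⟩) (by simp)
      have h2 : g ⟨(t : ℕ) + p, hb⟩ < g t' := hg (by rw [Fin.lt_def]; simp only [Fin.val_mk]; omega)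
      have h2' : (g ⟨(t : ℕ) + p, hb⟩ : ℕ) < (g t' : ℕ) := h2
      simp only [Fin.val_mk] at h1
      omega

lemma chain_lt {σ : Equiv.Perm (Fin (e + 1))} {G : Fin (e + 1) → ℕ} (hmono : Monotone G)
    (hc : ∀ u : ℕ, ∀ h : u + 1 < e + 1,
      G ⟨u, Nat.lt_of_succ_lt h⟩ = G ⟨u + 1, h⟩ → σ ⟨u, Nat.lt_of_succ_lt h⟩ < σ ⟨u + 1, h⟩) :
    ∀ i j : Fin (e + 1), i < j → G i = G j → σ i < σ j := by
  intro i j hij hG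
  obtain ⟨k, hk⟩ : ∃ k, (j : ℕ) = (i : ℕ) + k + 1 := by
    have : (i : ℕ) < (j : ℕ) := hij
    exact ⟨(j : ℕ) - i - 1, by omega⟩
  clear hij
  induction k generalizing j with
  | zero =>
      have hlt : (i : ℕ) + 1 < e + 1 := by have := j.isLt; omega
      have hj : j = ⟨(i : ℕ) + 1, hlt⟩ := Fin.ext (by simp only [Fin.val_mk]; omega)
      subst hj
      have hIi : (⟨(i : ℕ), Nat.lt_of_succ_lt hlt⟩ : Fin (e + 1)) = i := Fin.ext rfl
      have := hc (i : ℕ) hlt (by rw [hIi]; exact hG)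
      rwa [hIi] at this
  | succ p ih =>
      have hb : (i : ℕ) + p + 1 < e + 1 := by have := j.isLt; omega
      set j' : Fin (e + 1) := ⟨(i : ℕ) + p + 1, hb⟩ with hj'
      have hij' : i < j' := by rw [Fin.lt_def]; simp only [hj', Fin.val_mk]; omega
      have h1 : G i ≤ G j' := hmono (le_of_lt hij')
      have h2 : G j' ≤ G j := hmono (by rw [Fin.le_def]; simp [hj']; omega)
      have hGi' : G i = G j' := le_antisymm h1 (hG ▸ h2)
      have s1 := ih j' hGi' (by simp [hj'])
      have hlt2 : ((i : ℕ) + p + 1) + 1 < e + 1 := by have := j.isLt; omega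
      have hjj : j = ⟨(i : ℕ) + p + 1 + 1, hlt2⟩ := Fin.ext (by simp only [Fin.val_mk]; omega)
      have s2 : σ j' < σ j := by
        rw [hjj]
        exact hc ((i : ℕ) + p + 1) hlt2 (by
          rw [← hjj]
          calc G ⟨(i:ℕ) + p + 1, _⟩ = G j' := rfl
            _ = G i := hGi'.symm
            _ = G j := hG)
      exact lt_trans s1 s2

end core

section fiber

variable {e : ℕ}

lemma consec (σ : Equiv.Perm (Fin (e + 1))) {N : ℕ} {f : Fin (e + 1) → Fin N}
    (hf : Tuple.sort f = σ) :
    ∀ u : ℕ, ∀ h : u + 1 < e + 1,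
      (f (σ ⟨u, Nat.lt_of_succ_lt h⟩) : ℕ) + 1 ≤ (f (σ ⟨u + 1, h⟩) : ℕ) + Et σ u := by
  intro u h
  obtain ⟨hmono, htie⟩ := Tuple.eq_sort_iff.mp hf.symm
  have hle : f (σ ⟨u, Nat.lt_of_succ_lt h⟩) ≤ f (σ ⟨u + 1, h⟩) := by
    have hle' : (⟨u, Nat.lt_of_succ_lt h⟩ : Fin (e + 1)) ≤ ⟨u + 1, h⟩ := by
      rw [Fin.le_def]; simp only [Fin.val_mk]; omega
    exact hmono hle'
  rw [Et, dif_pos h]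
  by_cases hd : σ ⟨u + 1, h⟩ < σ ⟨u, Nat.lt_of_succ_lt h⟩
  · rw [if_pos hd]
    rcases lt_or_eq_of_le hle with hlt | heq
    · have : (f (σ ⟨u, Nat.lt_of_succ_lt h⟩) : ℕ) < (f (σ ⟨u + 1, h⟩) : ℕ) := hlt
      omega
    · exfalso
      have := htie ⟨u, Nat.lt_of_succ_lt h⟩ ⟨u + 1, h⟩
        (by rw [Fin.lt_def]; simp only [Fin.val_mk]; omega) heq
      exact lt_asymm hd this
  · rw [if_neg hd]
    have : (f (σ ⟨u, Nat.lt_of_succ_lt h⟩) : ℕ) ≤ (f (σ ⟨u + 1, h⟩) : ℕ) := hle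
    omega

/-- Forward map: from a tuple with sorting permutation `σ` to a strictly monotone tuple. -/
def fwd (σ : Equiv.Perm (Fin (e + 1))) (N : ℕ)
    (p : {f : Fin (e + 1) → Fin N // Tuple.sort f = σ}) :
    {g : Fin (e + 1) → Fin (N + (e - (descents (e + 1) σ).card)) // StrictMono g} := by
  refine ⟨fun t => ⟨(p.1 (σ t) : ℕ) + ccount σ (t : ℕ), ?_⟩, ?_⟩
  · have h1 : (p.1 (σ t) : ℕ) < N := (p.1 (σ t)).isLt
    have h2 : ccount σ (t : ℕ) ≤ e - (descents (e + 1) σ).card :=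
      ccount_le' σ (by have := t.isLt; omega)
    omega
  · rw [Fin.strictMono_iff_lt_succ]
    intro i
    rw [Fin.lt_def]
    show (p.1 (σ i.castSucc) : ℕ) + ccount σ (i.castSucc : ℕ)
        < (p.1 (σ i.succ) : ℕ) + ccount σ (i.succ : ℕ)
    have hlt : (i : ℕ) + 1 < e + 1 := by have := i.isLt; omega
    have hcs : Fin.castSucc i = ⟨(i : ℕ), Nat.lt_of_succ_lt hlt⟩ := Fin.ext (by simp)
    have hsc : i.succ = ⟨(i : ℕ) + 1, hlt⟩ := Fin.ext (by simp)
    rw [hcs, hsc]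
    simp only [Fin.val_mk]
    rw [ccount_succ]
    have hc := consec σ p.2 (i : ℕ) hlt
    omega

/-- Backward map. -/
def bwd (σ : Equiv.Perm (Fin (e + 1))) (N : ℕ)
    (q : {g : Fin (e + 1) → Fin (N + (e - (descents (e + 1) σ).card)) // StrictMono g}) :
    {f : Fin (e + 1) → Fin N // Tuple.sort f = σ} := by
  have bound : ∀ t : Fin (e + 1), (q.1 t : ℕ) - ccount σ (t : ℕ) < N := by
    intro t
    have h1 : ccount σ (t : ℕ) ≤ (t : ℕ) := ccount_le σ _
    have h2 : (t : ℕ) ≤ (q.1 t : ℕ) := by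
      have h0 := strictMono_gap q.2 (t := ⟨0, Nat.succ_pos e⟩) (t' := t) (by simp)
      simp only [Fin.val_mk] at h0
      omega
    have h3 := strictMono_gap q.2 (t := t) (t' := ⟨e, lt_add_one e⟩) (by simp; omega)
    simp only [Fin.val_mk] at h3
    have h4 : (q.1 ⟨e, lt_add_one e⟩ : ℕ) < N + (e - (descents (e + 1) σ).card) :=
      (q.1 ⟨e, lt_add_one e⟩).isLt
    have h5 := le_ccount_add σ (t := (t : ℕ)) (by have := t.isLt; omega)
    have h6 := ccount_le' σ (t := (t : ℕ)) (by have := t.isLt; omega)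
    have h7 := des_le σ
    omega
  refine ⟨fun x => ⟨(q.1 (σ.symm x) : ℕ) - ccount σ ((σ.symm x : Fin (e + 1)) : ℕ), bound _⟩, ?_⟩
  have gcons : ∀ u : ℕ, ∀ h : u + 1 < e + 1,
      (q.1 ⟨u, Nat.lt_of_succ_lt h⟩ : ℕ) < (q.1 ⟨u + 1, h⟩ : ℕ) :=
    fun u h => q.2 (by rw [Fin.lt_def]; simp only [Fin.val_mk]; omega)
  have gge : ∀ t : Fin (e + 1), ccount σ (t : ℕ) ≤ (q.1 t : ℕ) := by
    intro t
    have h1 : ccount σ (t : ℕ) ≤ (t : ℕ) := ccount_le σ _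
    have h2 : (t : ℕ) ≤ (q.1 t : ℕ) := by
      have h0 := strictMono_gap q.2 (t := ⟨0, Nat.succ_pos e⟩) (t' := t) (by simp)
      simp only [Fin.val_mk] at h0
      omega
    omega
  have hmono : Monotone (fun t =>
      ((⟨(q.1 (σ.symm (σ t)) : ℕ) - ccount σ ((σ.symm (σ t) : Fin (e + 1)) : ℕ),
        bound _⟩ : Fin N))) := by
    rw [Fin.monotone_iff_le_succ]
    intro i
    rw [Fin.le_def]
    simp only [Equiv.symm_apply_apply, Fin.val_mk]
    have hlt : (i : ℕ) + 1 < e + 1 := by have := i.isLt; omega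
    have hcs : Fin.castSucc i = ⟨(i : ℕ), Nat.lt_of_succ_lt hlt⟩ := Fin.ext (by simp)
    have hsc : i.succ = ⟨(i : ℕ) + 1, hlt⟩ := Fin.ext (by simp)
    rw [hcs, hsc]
    simp only [Fin.val_mk]
    rw [ccount_succ]
    have h1 := gcons (i : ℕ) hlt
    have h2 := gge ⟨(i : ℕ), Nat.lt_of_succ_lt hlt⟩
    simp only [Fin.val_mk] at h2
    have h3 := Et_le_one σ (i : ℕ)
    omega
  symm
  rw [Tuple.eq_sort_iff]
  refine ⟨hmono, ?_⟩
  intro a b hab heq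
  refine chain_lt (G := fun t => (q.1 t : ℕ) - ccount σ ((t : Fin (e + 1)) : ℕ)) ?_ ?_ a b hab ?_
  · -- monotone of the ℕ-valued version
    intro x y hxy
    have := hmono hxy
    rw [Fin.le_def] at this
    simpa only [Equiv.symm_apply_apply, Fin.val_mk] using this
  · intro u h hGeq
    simp only [Fin.val_mk] at hGeq
    have h1 := gcons u h
    have h2 := gge ⟨u, Nat.lt_of_succ_lt h⟩
    simp only [Fin.val_mk] at h2
    have h3 : ccount σ (u + 1) = ccount σ u + Et σ u := ccount_succ σ u
    have h4 := Et_le_one σ u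
    have hEt : Et σ u = 1 := by omega
    have hnd : ¬ σ ⟨u + 1, h⟩ < σ ⟨u, Nat.lt_of_succ_lt h⟩ := by
      intro hcon
      rw [Et, dif_pos h, if_pos hcon] at hEt
      exact absurd hEt (by omega)
    have hne : σ ⟨u, Nat.lt_of_succ_lt h⟩ ≠ σ ⟨u + 1, h⟩ := by
      intro hcon
      have := σ.injective hcon
      have : u = u + 1 := congrArg Fin.val this
      omega
    exact lt_of_le_of_ne (not_lt.mp hnd) hne
  · have := congrArg Fin.val heq
    simpa only [Equiv.symm_apply_apply, Fin.val_mk] using this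

lemma card_strictMonoFun (a b : ℕ) :
    Fintype.card {f : Fin a → Fin b // StrictMono f} = b.choose a := by
  classical
  have eqv : {f : Fin a → Fin b // StrictMono f} ≃ {s : Finset (Fin b) // s.card = a} := by
    refine ⟨fun p => ⟨Finset.univ.image p.1, ?_⟩,
            fun q => ⟨q.1.orderEmbOfFin q.2, (q.1.orderEmbOfFin q.2).strictMono⟩, ?_, ?_⟩
    · rw [Finset.card_image_of_injective _ p.2.injective, Finset.card_univ, Fintype.card_fin]
    · rintro ⟨f, hf⟩
      apply Subtype.ext
      exact (Finset.orderEmbOfFin_unique _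
        (fun x => Finset.mem_image_of_mem f (Finset.mem_univ x)) hf).symm
    · rintro ⟨s, hs⟩
      apply Subtype.ext
      apply Finset.coe_injective
      rw [Finset.coe_image, Finset.coe_univ, Set.image_univ, Finset.range_orderEmbOfFin]
  rw [Fintype.card_congr eqv, Fintype.card_finset_len, Fintype.card_fin]

lemma card_fiber (N : ℕ) (σ : Equiv.Perm (Fin (e + 1))) :
    Fintype.card {f : Fin (e + 1) → Fin N // Tuple.sort f = σ}
      = (N + (e - (descents (e + 1) σ).card)).choose (e + 1) := by
  rw [← card_strictMonoFun (e + 1) (N + (e - (descents (e + 1) σ).card))]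
  apply Fintype.card_congr
  refine ⟨fwd σ N, bwd σ N, ?_, ?_⟩
  · rintro ⟨f, hf⟩
    apply Subtype.ext
    funext x
    apply Fin.ext
    show ((fwd σ N ⟨f, hf⟩).1 (σ.symm x) : ℕ) - ccount σ ((σ.symm x : Fin (e + 1)) : ℕ) = (f x : ℕ)
    show ((f (σ (σ.symm x)) : ℕ) + ccount σ ((σ.symm x : Fin (e + 1)) : ℕ))
        - ccount σ ((σ.symm x : Fin (e + 1)) : ℕ) = (f x : ℕ)
    rw [Equiv.apply_symm_apply]
    omega
  · rintro ⟨g, hg⟩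
    apply Subtype.ext
    funext t
    apply Fin.ext
    show ((bwd σ N ⟨g, hg⟩).1 (σ t) : ℕ) + ccount σ (t : ℕ) = (g t : ℕ)
    show ((g (σ.symm (σ t)) : ℕ) - ccount σ ((σ.symm (σ t) : Fin (e + 1)) : ℕ))
        + ccount σ (t : ℕ) = (g t : ℕ)
    rw [Equiv.symm_apply_apply]
    have h1 : ccount σ (t : ℕ) ≤ (t : ℕ) := ccount_le σ _
    have h2 : (t : ℕ) ≤ (g t : ℕ) := by
      have h0 := strictMono_gap hg (t := ⟨0, Nat.succ_pos e⟩) (t' := t) (by simp)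
      simp only [Fin.val_mk] at h0
      omega
    omega

lemma sum_choose_eq_pow (N : ℕ) :
    ∑ σ : Equiv.Perm (Fin (e + 1)), ((N + (e - (descents (e + 1) σ).card)).choose (e + 1))
      = N ^ (e + 1) := by
  classical
  calc ∑ σ : Equiv.Perm (Fin (e + 1)), ((N + (e - (descents (e + 1) σ).card)).choose (e + 1))
      = ∑ σ : Equiv.Perm (Fin (e + 1)),
          Fintype.card {f : Fin (e + 1) → Fin N // Tuple.sort f = σ} := by
        exact Finset.sum_congr rfl (fun σ _ => (card_fiber N σ).symm)
    _ = Fintype.card (Σ σ : Equiv.Perm (Fin (e + 1)),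
          {f : Fin (e + 1) → Fin N // Tuple.sort f = σ}) := Fintype.card_sigma.symm
    _ = Fintype.card (Fin (e + 1) → Fin N) :=
        Fintype.card_congr (Equiv.sigmaFiberEquiv (fun f : Fin (e + 1) → Fin N => Tuple.sort f))
    _ = N ^ (e + 1) := by rw [Fintype.card_fun, Fintype.card_fin, Fintype.card_fin]

end fiber

section assembly

lemma hh_eq_choose {e des' : ℕ} (h : des' ≤ e) (N : ℕ) :
    hh (e + 2) ((N : ℤ) - 1 - des') = ((N + (e - des')).choose (e + 1) : ℤ) := by
  rcases le_or_gt (des' + 1) N with hN | hN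
  · have h0 : (0 : ℤ) ≤ (N : ℤ) - 1 - des' := by omega
    rw [hh, if_pos h0]
    have ht : ((N : ℤ) - 1 - des').toNat = N - 1 - des' := by omega
    rw [ht]
    have e1 : N - 1 - des' + (e + 2) - 1 = N + (e - des') := by omega
    rw [e1]
    have h2 : N + (e - des') - (N - 1 - des') = e + 1 := by omega
    rw [← h2, Nat.choose_symm (by omega)]
  · rw [hh_neg (by omega), Nat.choose_eq_zero_of_lt (by omega), Nat.cast_zero]

lemma group_by_descents {e : ℕ} (F : ℕ → ℤ) :
    ∑ j ∈ Finset.Icc 1 (e + 1), (A (e + 1) j : ℤ) * F j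
        = ∑ σ : Equiv.Perm (Fin (e + 1)), F ((descents (e + 1) σ).card + 1) := by
  classical
  have hmaps : ∀ σ : Equiv.Perm (Fin (e + 1)), σ ∈ (Finset.univ : Finset (Equiv.Perm (Fin (e+1))))
      → (descents (e + 1) σ).card + 1 ∈ Finset.Icc 1 (e + 1) := by
    intro σ _
    rw [Finset.mem_Icc]
    have := des_le σ
    omega
  rw [← Finset.sum_fiberwise_of_maps_to hmaps (fun σ => F ((descents (e + 1) σ).card + 1))]
  apply Finset.sum_congr rfl
  intro j hj
  have hj1 : 1 ≤ j := (Finset.mem_Icc.mp hj).1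
  have hinner : ∀ σ ∈ Finset.univ.filter
      (fun σ : Equiv.Perm (Fin (e+1)) => (descents (e + 1) σ).card + 1 = j),
      F ((descents (e + 1) σ).card + 1) = F j := by
    intro σ hσ
    rw [(Finset.mem_filter.mp hσ).2]
  rw [Finset.sum_congr rfl hinner, Finset.sum_const, nsmul_eq_mul]
  congr 1
  rw [A]
  norm_cast
  apply congrArg Finset.card
  apply Finset.filter_congr
  intro σ _
  constructor
  · intro h1; omega
  · intro h1; omega

lemma worpitzky (e : ℕ) (N : ℤ) :
    ∑ j ∈ Finset.Icc 1 (e + 1), (A (e + 1) j : ℤ) * hh (e + 2) (N - j)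
      = if 0 ≤ N then N ^ (e + 1) else 0 := by
  have group := group_by_descents (e := e) (fun j => hh (e + 2) (N - j))
  rcases le_or_gt 0 N with hN | hN
  · rw [if_pos hN]
    obtain ⟨N', rfl⟩ : ∃ n : ℕ, N = (n : ℤ) := ⟨N.toNat, by omega⟩
    rw [group]
    have hterm : ∀ σ : Equiv.Perm (Fin (e + 1)),
        hh (e + 2) ((N' : ℤ) - ((descents (e + 1) σ).card + 1 : ℕ))
          = ((N' + (e - (descents (e + 1) σ).card)).choose (e + 1) : ℤ) := by
      intro σ
      have harg : (N' : ℤ) - ((descents (e + 1) σ).card + 1 : ℕ)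
          = (N' : ℤ) - 1 - (descents (e + 1) σ).card := by push_cast; ring
      rw [harg]
      exact hh_eq_choose (des_le σ) N'
    rw [Finset.sum_congr rfl (fun σ _ => hterm σ)]
    rw [← Nat.cast_sum]
    rw [sum_choose_eq_pow]
    push_cast
    ring
  · rw [if_neg (by omega), group]
    apply Finset.sum_eq_zero
    intro σ _
    apply hh_neg
    have : (0 : ℤ) ≤ ((descents (e + 1) σ).card + 1 : ℕ) := by positivity
    omega

end assembly

/-- Brenti–Welker identity. -/
theorem stmt0 (d r i : ℕ) (hd : 1 ≤ d) (hr : 1 ≤ r) (hi1 : 1 ≤ i) (hid : i ≤ d) :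
    ∑ j ∈ Finset.Icc 1 d, C (r - 1) (d + 1) ((i : ℤ) * r - j) * A d j = r ^ d * A d i := by
  obtain ⟨e, rfl⟩ : ∃ e, d = e + 1 := ⟨d - 1, by omega⟩
  have hrcast : ((r - 1 : ℕ) : ℤ) + 1 = (r : ℤ) := by omega
  have main : ∑ j ∈ Finset.Icc 1 (e + 1),
        (C (r - 1) (e + 2) ((i : ℤ) * r - j) : ℤ) * (A (e + 1) j : ℤ)
      = (r : ℤ) ^ (e + 1) * (A (e + 1) i : ℤ) := by
    have step1 : ∀ j : ℕ, (C (r - 1) (e + 2) ((i : ℤ) * r - j) : ℤ)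
        = ∑ k ∈ Finset.range (e + 3),
            (-1 : ℤ) ^ k * ((e + 2).choose k) * hh (e + 2) (((i : ℤ) * r - k * r) - j) := by
      intro j
      rw [C_eq (r - 1) (e + 2) ((i : ℤ) * r - j)]
      apply Finset.sum_congr rfl
      intro k _
      congr 1
      rw [hrcast]
      ring
    calc ∑ j ∈ Finset.Icc 1 (e + 1),
            (C (r - 1) (e + 2) ((i : ℤ) * r - j) : ℤ) * (A (e + 1) j : ℤ)
        = ∑ j ∈ Finset.Icc 1 (e + 1), ∑ k ∈ Finset.range (e + 3),
            (A (e + 1) j : ℤ) * ((-1 : ℤ) ^ k * ((e + 2).choose k)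
              * hh (e + 2) (((i : ℤ) * r - k * r) - j)) := by
          apply Finset.sum_congr rfl
          intro j _
          rw [step1 j, Finset.sum_mul]
          apply Finset.sum_congr rfl
          intro k _
          ring
      _ = ∑ k ∈ Finset.range (e + 3), (-1 : ℤ) ^ k * ((e + 2).choose k)
            * ∑ j ∈ Finset.Icc 1 (e + 1),
              (A (e + 1) j : ℤ) * hh (e + 2) (((i : ℤ) * r - k * r) - j) := by
          rw [Finset.sum_comm]
          apply Finset.sum_congr rfl
          intro k _
          rw [Finset.mul_sum]
          apply Finset.sum_congr rfl
          intro j _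
          ring
      _ = ∑ k ∈ Finset.range (e + 3), (-1 : ℤ) ^ k * ((e + 2).choose k)
            * ((if 0 ≤ (i : ℤ) - k then ((i : ℤ) - k) ^ (e + 1) else 0) * (r : ℤ) ^ (e + 1)) := by
          apply Finset.sum_congr rfl
          intro k _
          rw [worpitzky e ((i : ℤ) * r - k * r)]
          congr 1
          rcases le_or_gt (0 : ℤ) ((i : ℤ) - k) with hik | hik
          · rw [if_pos hik, if_pos (by nlinarith [Int.ofNat_nonneg r] : (0:ℤ) ≤ (i : ℤ) * r - k * r)]
            have : (i : ℤ) * r - k * r = ((i : ℤ) - k) * r := by ring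
            rw [this, mul_pow]
          · have h1 : (i : ℤ) - k ≤ -1 := by omega
            have h2 : (1 : ℤ) ≤ r := by exact_mod_cast hr
            have h3 : (i : ℤ) * r - k * r < 0 := by nlinarith
            rw [if_neg (show ¬ (0 : ℤ) ≤ (i : ℤ) - k by omega), zero_mul,
              if_neg (not_le.mpr h3)]
      _ = ((∑ k ∈ Finset.range (e + 3), (-1 : ℤ) ^ k * ((e + 2).choose k)
            * (if 0 ≤ (i : ℤ) - k then ((i : ℤ) - k) ^ (e + 1) else 0))) * (r : ℤ) ^ (e + 1) := by
          rw [Finset.sum_mul]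
          apply Finset.sum_congr rfl
          intro k _
          ring
      _ = (A (e + 1) i : ℤ) * (r : ℤ) ^ (e + 1) := by
          congr 1
          calc ∑ k ∈ Finset.range (e + 3), (-1 : ℤ) ^ k * ((e + 2).choose k)
                * (if 0 ≤ (i : ℤ) - k then ((i : ℤ) - k) ^ (e + 1) else 0)
              = ∑ k ∈ Finset.range (e + 3), (-1 : ℤ) ^ k * ((e + 2).choose k)
                * ∑ j ∈ Finset.Icc 1 (e + 1),
                  (A (e + 1) j : ℤ) * hh (e + 2) (((i : ℤ) - k) - j) := by
                apply Finset.sum_congr rfl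
                intro k _
                rw [worpitzky e ((i : ℤ) - k)]
            _ = ∑ k ∈ Finset.range (e + 3), ∑ j ∈ Finset.Icc 1 (e + 1),
                  (-1 : ℤ) ^ k * ((e + 2).choose k)
                    * ((A (e + 1) j : ℤ) * hh (e + 2) (((i : ℤ) - k) - j)) := by
                apply Finset.sum_congr rfl
                intro k _
                rw [Finset.mul_sum]
            _ = ∑ j ∈ Finset.Icc 1 (e + 1), (A (e + 1) j : ℤ)
                * ∑ k ∈ Finset.range (e + 3), (-1 : ℤ) ^ k * ((e + 2).choose k)
                  * hh (e + 2) (((i : ℤ) - j) - k) := by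
                rw [Finset.sum_comm]
                apply Finset.sum_congr rfl
                intro j _
                rw [Finset.mul_sum]
                apply Finset.sum_congr rfl
                intro k _
                have harg : ((i : ℤ) - k) - j = ((i : ℤ) - j) - k := by ring
                rw [harg]
                ring
            _ = ∑ j ∈ Finset.Icc 1 (e + 1), (A (e + 1) j : ℤ)
                * (if (i : ℤ) - j = 0 then 1 else 0) := by
                apply Finset.sum_congr rfl
                intro j _
                rw [alt_sum_hh (e + 2) ((i : ℤ) - j)]
            _ = (A (e + 1) i : ℤ) := by
                have hstep : ∀ j ∈ Finset.Icc 1 (e + 1),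
                    (A (e + 1) j : ℤ) * (if (i : ℤ) - j = 0 then 1 else 0)
                      = if j = i then (A (e + 1) j : ℤ) else 0 := by
                  intro j _
                  rcases eq_or_ne j i with rfl | hne
                  · simp
                  · rw [if_neg hne, if_neg (fun hcon => hne (by omega)), mul_zero]
                rw [Finset.sum_congr rfl hstep,
                  Finset.sum_ite_eq' (Finset.Icc 1 (e + 1)) i (fun j => (A (e + 1) j : ℤ)),
                  if_pos (Finset.mem_Icc.mpr ⟨hi1, hid⟩)]
      _ = (r : ℤ) ^ (e + 1) * (A (e + 1) i : ℤ) := by ring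
  show ∑ j ∈ Finset.Icc 1 (e + 1), C (r - 1) (e + 2) ((i : ℤ) * r - j) * A (e + 1) j
      = r ^ (e + 1) * A (e + 1) i
  exact_mod_cast main
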